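/- arXiv:2202.12126 — 2 statements merged into one kernel-verified Lean document; each statement's English description precedes it below -/
import Mathlib

section
/- Let r ≥ 1 be an integer, λ_1,…,λ_r > 0, T ≥ 0, D > 0, and let N be a positive integer. For each j ∈ {1,…,r} let (a_{n,j})_{n≥N} be complex numbers satisfying Re(a_{n,j}) < 0, |Im(a_{n,j})| ≤ T, and |a_{n,j} + n/λ_j| ≤ D for all n ≥ N. Then there exist constants K > 0, C > 0 and R > 0 such that for every s ∈ ℂ with |s| ≥ R, ∑_{j=1}^r ∑_{n ≥ N, |a_{n,j}| < |s|/2} |s|² Re(a_{n,j}) / (|a_{n,j}|² |s − a_{n,j}|²) ≤ −K log|s| + C. -/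
open Complex

lemma harmonic_log_aux {m M : ℕ} (hm : 1 ≤ m) (hmM : m ≤ M) :
    Real.log M - Real.log m ≤ ∑ n ∈ Finset.Ico m M, (1 / (n : ℝ)) := by
  have h1 : Real.log M - Real.log m
      = ∑ n ∈ Finset.Ico m M, (Real.log ((n + 1 : ℕ)) - Real.log (n : ℕ)) := by
    rw [Finset.sum_Ico_eq_sub _ hmM, Finset.sum_range_sub (fun n => Real.log n),
      Finset.sum_range_sub (fun n => Real.log n)]
    ring
  rw [h1]
  apply Finset.sum_le_sum
  intro n hn
  have hn1 : 1 ≤ n := le_trans hm (Finset.mem_Ico.1 hn).1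
  have hnpos : (0 : ℝ) < n := by exact_mod_cast hn1
  have h4 : Real.log ((n : ℝ) + 1) - Real.log n = Real.log (((n : ℝ) + 1) / n) := by
    rw [Real.log_div (by positivity) (ne_of_gt hnpos)]
  push_cast
  rw [h4]
  have h2 := Real.log_le_sub_one_of_pos (x := ((n : ℝ) + 1) / n) (by positivity)
  have h3 : ((n : ℝ) + 1) / n - 1 = 1 / n := by field_simp; ring
  linarith

set_option maxHeartbeats 1000000 in
/-- If for each `1 ≤ j ≤ r` the numbers `a_{n,j}` (for `n ≥ N`) satisfy `Re a_{n,j} < 0`,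
`|Im a_{n,j}| ≤ T` and `|a_{n,j} + n/λ_j| ≤ D`, then there are `K, C, R > 0` such that for
`|s| ≥ R`,
`∑_{j=1}^r ∑_{n ≥ N, |a_{n,j}| < |s|/2} |s|² Re a_{n,j} / (|a_{n,j}|² |s − a_{n,j}|²)
  ≤ −K log|s| + C`. -/
theorem trivial_zero_sum_estimate (r : ℕ) (hr : 1 ≤ r)
    (lam : Fin r → ℝ) (hlam : ∀ j, 0 < lam j)
    (T : ℝ) (hT : 0 ≤ T) (D : ℝ) (hD : 0 < D) (N : ℕ) (hN : 0 < N)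
    (a : Fin r → ℕ → ℂ)
    (ha : ∀ j : Fin r, ∀ n : ℕ, N ≤ n →
      (a j n).re < 0 ∧ |(a j n).im| ≤ T ∧ ‖a j n + (n : ℂ) / (lam j : ℂ)‖ ≤ D) :
    ∃ K > (0 : ℝ), ∃ C > (0 : ℝ), ∃ R > (0 : ℝ), ∀ s : ℂ, R ≤ ‖s‖ →
      (∑ j : Fin r, ∑' n : ℕ,
          Set.indicator {n : ℕ | N ≤ n ∧ ‖a j n‖ < ‖s‖ / 2}
            (fun n => ‖s‖ ^ 2 * (a j n).re / (‖a j n‖ ^ 2 * ‖s - a j n‖ ^ 2)) n)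
        ≤ -K * Real.log ‖s‖ + C := by
  have j₀ : Fin r := ⟨0, hr⟩
  set L : ℝ := lam j₀ with hLdef
  have hL : 0 < L := hlam j₀
  -- norm of n/λ_j
  have hnormdiv : ∀ (j : Fin r) (n : ℕ), ‖(n : ℂ) / (lam j : ℂ)‖ = (n : ℝ) / lam j := by
    intro j n
    have : (n : ℂ) / (lam j : ℂ) = (((n : ℝ) / lam j : ℝ) : ℂ) := by push_cast; ring
    rw [this, Complex.norm_real, Real.norm_of_nonneg (div_nonneg (Nat.cast_nonneg n) (hlam j).le)]
  -- real part of n/λ_j and lower/upper bounds on a j n for n ≥ N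
  have hbounds : ∀ (j : Fin r) (n : ℕ), N ≤ n →
      (a j n).re + (n : ℝ) / lam j ≤ D ∧ ‖a j n‖ ≤ (n : ℝ) / lam j + D ∧
        (n : ℝ) / lam j - D ≤ ‖a j n‖ := by
    intro j n hn
    obtain ⟨hre, _, hd⟩ := ha j n hn
    have hcast : (n : ℂ) / (lam j : ℂ) = (((n : ℝ) / lam j : ℝ) : ℂ) := by push_cast; ring
    have hrepart : (a j n + (n : ℂ) / (lam j : ℂ)).re = (a j n).re + (n : ℝ) / lam j := by
      rw [hcast]; simp
    have h1 : |(a j n).re + (n : ℝ) / lam j| ≤ D := by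
      rw [← hrepart]
      exact le_trans (Complex.abs_re_le_norm _) (by exact hd)
    refine ⟨(abs_le.1 h1).2, ?_, ?_⟩
    · have := norm_sub_le (a j n + (n : ℂ) / (lam j : ℂ)) ((n : ℂ) / (lam j : ℂ))
      simp only [add_sub_cancel_right] at this
      calc ‖a j n‖ ≤ ‖a j n + (n : ℂ) / (lam j : ℂ)‖ + ‖(n : ℂ) / (lam j : ℂ)‖ := this
        _ ≤ D + (n : ℝ) / lam j := by rw [hnormdiv]; linarith
        _ = (n : ℝ) / lam j + D := by ring
    · have h3 : ‖(n : ℂ) / (lam j : ℂ)‖ ≤ ‖a j n + (n : ℂ) / (lam j : ℂ)‖ + ‖a j n‖ := by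
        calc ‖(n : ℂ) / (lam j : ℂ)‖ = ‖(a j n + (n : ℂ) / (lam j : ℂ)) - a j n‖ := by
              rw [add_sub_cancel_left]
          _ ≤ _ := norm_sub_le _ _
      rw [hnormdiv] at h3
      linarith
  set N₀ : ℕ := max N (Nat.ceil (2 * D * L)) + 1 with hN₀def
  have hN₀N : N ≤ N₀ := le_trans (le_max_left _ _) (Nat.le_succ _)
  have hN₀1 : 1 ≤ N₀ := Nat.succ_le_succ (Nat.zero_le _)
  have hN₀D : 2 * D * L ≤ (N₀ : ℝ) := by
    have h1 : 2 * D * L ≤ (Nat.ceil (2 * D * L) : ℝ) := Nat.le_ceil _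
    have h2 : (Nat.ceil (2 * D * L) : ℕ) ≤ N₀ := le_trans (le_max_right _ _) (Nat.le_succ _)
    exact le_trans h1 (by exact_mod_cast h2)
  refine ⟨L / 18, by positivity,
    L / 18 * (Real.log N₀ + |Real.log (L / 4)|) + 1, ?_,
    4 * D + 4 / L + 4 * (N₀ : ℝ) / L + 1, by positivity, ?_⟩
  · have hlogN₀ : 0 ≤ Real.log N₀ := Real.log_natCast_nonneg _
    positivity
  intro s hs
  set S : ℝ := ‖s‖ with hSdef
  have hS : 0 < S := lt_of_lt_of_le (by positivity) hs
  -- every term is nonpositive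
  have hterm_nonpos : ∀ (j : Fin r) (n : ℕ),
      Set.indicator {n : ℕ | N ≤ n ∧ ‖a j n‖ < S / 2}
        (fun n => S ^ 2 * (a j n).re / (‖a j n‖ ^ 2 * ‖s - a j n‖ ^ 2)) n ≤ 0 := by
    intro j n
    by_cases h : n ∈ {n : ℕ | N ≤ n ∧ ‖a j n‖ < S / 2}
    · rw [Set.indicator_of_mem h]
      exact div_nonpos_of_nonpos_of_nonneg
        (mul_nonpos_of_nonneg_of_nonpos (by positivity) (ha j n h.1).1.le) (by positivity)
    · rw [Set.indicator_of_notMem h]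
  -- summability
  have hsummable : ∀ j : Fin r, Summable (fun n : ℕ =>
      Set.indicator {n : ℕ | N ≤ n ∧ ‖a j n‖ < S / 2}
        (fun n => S ^ 2 * (a j n).re / (‖a j n‖ ^ 2 * ‖s - a j n‖ ^ 2)) n) := by
    intro j
    apply summable_of_ne_finset_zero (s := Finset.range (Nat.ceil (lam j * (S / 2 + D)) + 1))
    intro n hn
    rw [Set.indicator_apply_eq_zero]
    intro hmem
    exfalso
    obtain ⟨hnN, hna⟩ := hmem
    have h1 : (n : ℝ) / lam j - D ≤ ‖a j n‖ := (hbounds j n hnN).2.2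
    have h2 : lam j * (S / 2 + D) < (n : ℝ) := by
      have : Nat.ceil (lam j * (S / 2 + D)) + 1 ≤ n := by
        simpa [Finset.mem_range, not_lt] using hn
      have h3 : (Nat.ceil (lam j * (S / 2 + D)) : ℝ) < n := by exact_mod_cast this
      exact lt_of_le_of_lt (Nat.le_ceil _) h3
    have h4 : S / 2 + D < (n : ℝ) / lam j := by
      rw [lt_div_iff₀ (hlam j)]; linarith [mul_comm (lam j) (S / 2 + D)]
    linarith
  -- each inner tsum is ≤ 0
  have htsum_nonpos : ∀ j : Fin r, (∑' n : ℕ,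
      Set.indicator {n : ℕ | N ≤ n ∧ ‖a j n‖ < S / 2}
        (fun n => S ^ 2 * (a j n).re / (‖a j n‖ ^ 2 * ‖s - a j n‖ ^ 2)) n) ≤ 0 :=
    fun j => tsum_nonpos (hterm_nonpos j)
  -- reduce to the j₀ summand
  set g : Fin r → ℝ := fun j => ∑' n : ℕ,
      Set.indicator {n : ℕ | N ≤ n ∧ ‖a j n‖ < S / 2}
        (fun n => S ^ 2 * (a j n).re / (‖a j n‖ ^ 2 * ‖s - a j n‖ ^ 2)) n with hgdef
  have hsum_le : (∑ j : Fin r, g j) ≤ g j₀ := by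
    have h1 : ∀ i ∈ Finset.univ, 0 ≤ -g i := fun i _ => neg_nonneg.2 (htsum_nonpos i)
    have h2 := Finset.single_le_sum h1 (Finset.mem_univ j₀)
    have h3 : ∑ j : Fin r, -g j = -∑ j : Fin r, g j := by rw [Finset.sum_neg_distrib]
    rw [h3] at h2
    linarith
  -- the floor cutoff
  set M : ℕ := Nat.floor (L * (S / 2 - D)) with hMdef
  have hSbig : 4 * D + 4 / L + 4 * (N₀ : ℝ) / L + 1 ≤ S := hs
  have hN₀pos : (0 : ℝ) < N₀ := by exact_mod_cast hN₀1
  have hMge : L * S / 4 ≤ (M : ℝ) := by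
    have h1 : L * (S / 2 - D) - 1 < (M : ℝ) := Nat.sub_one_lt_floor _
    have h2 : 4 / L + 4 * D ≤ S := by
      have : 0 ≤ 4 * (N₀ : ℝ) / L := by positivity
      linarith
    have h3 : 4 + 4 * D * L ≤ S * L := by
      have := mul_le_mul_of_nonneg_right h2 hL.le
      calc 4 + 4 * D * L = (4 / L + 4 * D) * L := by field_simp
        _ ≤ S * L := this
    nlinarith
  have hMN₀ : N₀ ≤ M := by
    have h1 : (N₀ : ℝ) ≤ L * S / 4 := by
      have h2 : 4 * (N₀ : ℝ) / L ≤ S := by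
        have : (0:ℝ) ≤ 4 * D + 4 / L := by positivity
        linarith
      rw [div_le_iff₀ hL] at h2
      linarith
    exact_mod_cast le_trans h1 hMge
  have hMle : (M : ℝ) ≤ L * (S / 2 - D) := by
    apply Nat.floor_le
    have : 4 * D ≤ S := by
      have h1 : (0:ℝ) ≤ 4 / L + 4 * (N₀ : ℝ) / L + 1 := by positivity
      linarith
    have : 0 ≤ S / 2 - D := by linarith
    positivity
  -- per-term bound on Ico N₀ M
  have hbound : ∀ n ∈ Finset.Ico N₀ M,
      Set.indicator {n : ℕ | N ≤ n ∧ ‖a j₀ n‖ < S / 2}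
        (fun n => S ^ 2 * (a j₀ n).re / (‖a j₀ n‖ ^ 2 * ‖s - a j₀ n‖ ^ 2)) n
      ≤ -(L / 18) * (1 / (n : ℝ)) := by
    intro n hn
    obtain ⟨hn1, hn2⟩ := Finset.mem_Ico.1 hn
    have hnN : N ≤ n := le_trans hN₀N hn1
    have hn0 : (0 : ℝ) < n := lt_of_lt_of_le hN₀pos (by exact_mod_cast hn1)
    obtain ⟨hre, _, _⟩ := ha j₀ n hnN
    obtain ⟨hreD, hAub, _⟩ := hbounds j₀ n hnN
    rw [← hLdef] at hreD hAub
    have h2DL : 2 * D * L ≤ (n : ℝ) := le_trans hN₀D (by exact_mod_cast hn1)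
    have hDn : D ≤ (n : ℝ) / (2 * L) := by rw [le_div_iff₀ (by positivity)]; nlinarith
    have hx : (a j₀ n).re ≤ -((n : ℝ) / (2 * L)) := by
      have hhalf : (n : ℝ) / (2 * L) - (n : ℝ) / L = -((n : ℝ) / (2 * L)) := by
        field_simp; ring
      linarith
    have hA : ‖a j₀ n‖ ≤ 2 * (n : ℝ) / L := by
      have he : 2 * (n : ℝ) / L - ((n : ℝ) / L + (n : ℝ) / (2 * L)) = (n : ℝ) / (2 * L) := by
        ring
      have h0 : (0:ℝ) ≤ (n : ℝ) / (2 * L) := by positivity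
      linarith
    -- membership
    have hnM : (n : ℝ) < (M : ℝ) := by exact_mod_cast hn2
    have hmem : n ∈ {n : ℕ | N ≤ n ∧ ‖a j₀ n‖ < S / 2} := by
      refine ⟨hnN, ?_⟩
      have h5 : (n : ℝ) / L < S / 2 - D := by
        rw [div_lt_iff₀ hL]
        have := lt_of_lt_of_le hnM hMle
        linarith [mul_comm (S / 2 - D) L, this]
      linarith
    rw [Set.indicator_of_mem hmem]
    -- norms
    have hApos : 0 < ‖a j₀ n‖ := by
      have h6 : |(a j₀ n).re| ≤ ‖a j₀ n‖ := by
        exact Complex.abs_re_le_norm _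
      have h7 : (n : ℝ) / (2 * L) ≤ |(a j₀ n).re| := by
        rw [abs_of_neg hre]; linarith
      have : (0:ℝ) < (n : ℝ) / (2 * L) := by positivity
      linarith
    have hsa1 : S / 2 ≤ ‖s - a j₀ n‖ := by
      have := norm_sub_norm_le s (a j₀ n)
      have h8 : ‖a j₀ n‖ < S / 2 := hmem.2
      linarith
    have hsa2 : ‖s - a j₀ n‖ ≤ 3 * S / 2 := by
      have := norm_sub_le s (a j₀ n)
      have h8 : ‖a j₀ n‖ < S / 2 := hmem.2
      linarith
    have hsapos : 0 < ‖s - a j₀ n‖ := by linarith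
    -- final per-term inequality
    rw [show -(L / 18) * (1 / (n : ℝ)) = (-(L / 18)) / (n : ℝ) by ring]
    rw [div_le_div_iff₀ (by positivity) hn0]
    -- goal: S^2 * re * n ≤ -(L/18) * (A^2 * B^2)
    set A : ℝ := ‖a j₀ n‖
    set B : ℝ := ‖s - a j₀ n‖
    have hA' : A * L ≤ 2 * (n : ℝ) := by
      have h := mul_le_mul_of_nonneg_right hA hL.le
      have he : 2 * (n : ℝ) / L * L = 2 * (n : ℝ) := by field_simp
      linarith
    have hA2 : A ^ 2 ≤ 4 * (n : ℝ) ^ 2 / L ^ 2 := by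
      rw [le_div_iff₀ (by positivity)]
      nlinarith [hA', mul_nonneg (norm_nonneg (a j₀ n)) hL.le]
    have hB2 : B ^ 2 ≤ 9 * S ^ 2 / 4 := by nlinarith
    have hden : A ^ 2 * B ^ 2 ≤ 9 * (n : ℝ) ^ 2 * S ^ 2 / L ^ 2 := by
      calc A ^ 2 * B ^ 2 ≤ (4 * (n : ℝ) ^ 2 / L ^ 2) * (9 * S ^ 2 / 4) := by
            apply mul_le_mul hA2 hB2 (by positivity) (by positivity)
        _ = 9 * (n : ℝ) ^ 2 * S ^ 2 / L ^ 2 := by field_simp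
    have hstep1 : -(L / 18) * (9 * (n : ℝ) ^ 2 * S ^ 2 / L ^ 2) ≤ -(L / 18) * (A ^ 2 * B ^ 2) :=
      mul_le_mul_of_nonpos_left hden (by linarith)
    have hstep2 : S ^ 2 * (a j₀ n).re * (n : ℝ) ≤ -(L / 18) * (9 * (n : ℝ) ^ 2 * S ^ 2 / L ^ 2) := by
      have h9 : -(L / 18) * (9 * (n : ℝ) ^ 2 * S ^ 2 / L ^ 2) = -((n : ℝ) / (2 * L)) * (S ^ 2 * (n : ℝ)) := by
        field_simp; ring
      rw [h9]
      have := mul_le_mul_of_nonneg_right hx (show (0:ℝ) ≤ S ^ 2 * (n : ℝ) by positivity)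
      linarith
    linarith
  -- assemble
  have hIco : (∑ n ∈ Finset.Ico N₀ M,
      Set.indicator {n : ℕ | N ≤ n ∧ ‖a j₀ n‖ < S / 2}
        (fun n => S ^ 2 * (a j₀ n).re / (‖a j₀ n‖ ^ 2 * ‖s - a j₀ n‖ ^ 2)) n)
      ≤ -(L / 18) * (Real.log M - Real.log N₀) := by
    have h1 := Finset.sum_le_sum hbound
    have h2 : ∑ n ∈ Finset.Ico N₀ M, -(L / 18) * (1 / (n : ℝ))
        = -(L / 18) * ∑ n ∈ Finset.Ico N₀ M, (1 / (n : ℝ)) := by rw [Finset.mul_sum]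
    have h3 := mul_le_mul_of_nonpos_left (harmonic_log_aux hN₀1 hMN₀)
      (show -(L / 18) ≤ 0 by linarith)
    linarith
  have htsum_le : g j₀ ≤ ∑ n ∈ Finset.Ico N₀ M,
      Set.indicator {n : ℕ | N ≤ n ∧ ‖a j₀ n‖ < S / 2}
        (fun n => S ^ 2 * (a j₀ n).re / (‖a j₀ n‖ ^ 2 * ‖s - a j₀ n‖ ^ 2)) n := by
    have h1 := Summable.sum_le_tsum (Finset.Ico N₀ M)
      (fun n _ => neg_nonneg.2 (hterm_nonpos j₀ n)) (hsummable j₀).neg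
    rw [tsum_neg] at h1
    have h2 : ∑ n ∈ Finset.Ico N₀ M, -(Set.indicator {n : ℕ | N ≤ n ∧ ‖a j₀ n‖ < S / 2}
        (fun n => S ^ 2 * (a j₀ n).re / (‖a j₀ n‖ ^ 2 * ‖s - a j₀ n‖ ^ 2)) n)
        = -∑ n ∈ Finset.Ico N₀ M, Set.indicator {n : ℕ | N ≤ n ∧ ‖a j₀ n‖ < S / 2}
        (fun n => S ^ 2 * (a j₀ n).re / (‖a j₀ n‖ ^ 2 * ‖s - a j₀ n‖ ^ 2)) n := by
      rw [Finset.sum_neg_distrib]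
    rw [h2] at h1
    rw [hgdef]
    linarith
  -- log bounds
  have hlogM : Real.log (L * S / 4) ≤ Real.log M := by
    apply Real.log_le_log (by positivity)
    linarith [hMge]
  have hlogsplit : Real.log (L * S / 4) = Real.log (L / 4) + Real.log S := by
    rw [show L * S / 4 = (L / 4) * S by ring, Real.log_mul (by positivity) (ne_of_gt hS)]
  have hfinal : -(L / 18) * (Real.log M - Real.log N₀)
      ≤ -(L / 18) * Real.log S + (L / 18 * (Real.log N₀ + |Real.log (L / 4)|) + 1) := by
    have h1 : Real.log (L / 4) + Real.log S - Real.log N₀ ≤ Real.log M - Real.log N₀ := by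
      linarith [hlogM, hlogsplit]
    have h2 := mul_le_mul_of_nonpos_left h1 (show -(L / 18) ≤ 0 by nlinarith)
    have h3 : -Real.log (L / 4) ≤ |Real.log (L / 4)| := neg_le_abs _
    nlinarith [h2, h3, hL]
  calc (∑ j : Fin r, g j) ≤ g j₀ := hsum_le
    _ ≤ _ := htsum_le
    _ ≤ -(L / 18) * (Real.log M - Real.log N₀) := hIco
    _ ≤ -(L / 18) * Real.log S + (L / 18 * (Real.log N₀ + |Real.log (L / 4)|) + 1) := hfinal
end

section
/- Let F be an element of the Selberg class with F not identically equal to 1, let k ≥ 0 be an integer, and let α > 0. Then F^{(k)} has only finitely many zeros in the region {s ∈ ℂ : Re(s) > −α and |Im(s)| ≤ T_F}. -/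
open Complex

/-- An element of the Selberg class `𝒮`: a Dirichlet series `F(s) = ∑ a(n) n^(-s)` satisfying
the five Selberg axioms.  The field `toFun` is the analytic continuation of the series to
`ℂ ∖ {1}`. -/
structure SelbergClass where
  /-- the analytic continuation of the Dirichlet series to `ℂ ∖ {1}` -/
  toFun : ℂ → ℂ
  /-- Dirichlet series coefficients -/
  a : ℕ → ℂ
  analytic : DifferentiableOn ℂ toFun {(1 : ℂ)}ᶜ
  /-- Axiom 1: absolute convergence for `Re s > 1` -/
  abs_conv : ∀ s : ℂ, 1 < s.re → Summable fun n : ℕ+ => ‖a n / (n : ℂ) ^ s‖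
  series_eq : ∀ s : ℂ, 1 < s.re → toFun s = ∑' n : ℕ+, a n / (n : ℂ) ^ s
  /-- Axiom 2: `(s - 1)^m F(s)` extends to an entire function `E` of finite order -/
  m : ℕ
  E : ℂ → ℂ
  E_diff : Differentiable ℂ E
  E_eq : ∀ s : ℂ, s ≠ 1 → E s = (s - 1) ^ m * toFun s
  E_order : ∃ C > 0, ∃ ρ > 0, ∀ s : ℂ, ‖E s‖ ≤ C * Real.exp (‖s‖ ^ ρ)
  /-- Axiom 3: the functional equation with `r` gamma factors -/
  r : ℕ
  Q : ℝ
  Q_pos : 0 < Q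
  lam : Fin r → ℝ
  lam_pos : ∀ j, 0 < lam j
  mu : Fin r → ℂ
  mu_re : ∀ j, 0 ≤ (mu j).re
  w : ℂ
  w_abs : ‖w‖ = 1
  func_eq : ∀ s : ℂ, s ≠ 0 → s ≠ 1 →
    (Q : ℂ) ^ s * (∏ j, Complex.Gamma ((lam j : ℂ) * s + mu j)) * toFun s =
      w * (starRingEnd ℂ)
        ((Q : ℂ) ^ (1 - (starRingEnd ℂ) s) *
          (∏ j, Complex.Gamma ((lam j : ℂ) * (1 - (starRingEnd ℂ) s) + mu j)) *
          toFun (1 - (starRingEnd ℂ) s))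
  /-- Axiom 4: `a n ≪_ε n^ε` -/
  a_bound : ∀ ε : ℝ, 0 < ε → ∃ C > 0, ∀ n : ℕ, 1 ≤ n → ‖a n‖ ≤ C * (n : ℝ) ^ ε
  /-- Axiom 5: Euler product, i.e. `log F(s) = ∑ b(n) n^(-s)` for `Re s > 1` -/
  b : ℕ → ℂ
  b_supp : ∀ n : ℕ, b n ≠ 0 → IsPrimePow n
  b_bound : ∃ θ : ℝ, θ < 1 / 2 ∧ ∃ C > 0, ∀ n : ℕ, 1 ≤ n → ‖b n‖ ≤ C * (n : ℝ) ^ θ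
  b_conv : ∀ s : ℂ, 1 < s.re → Summable fun n : ℕ+ => ‖b n / (n : ℂ) ^ s‖
  log_eq : ∀ s : ℂ, 1 < s.re → Complex.exp (∑' n : ℕ+, b n / (n : ℂ) ^ s) = toFun s

/-- `T_F := max_{1 ≤ j ≤ r} |Im μ_j / λ_j|`, with `T_F = 0` when `r = 0`. -/
noncomputable def SelbergClass.TF (F : SelbergClass) : ℝ :=
  ⨆ j : Fin F.r, |(F.mu j).im / F.lam j|

/-- `F` is not identically equal to `1`. -/
def SelbergClass.Nontrivial (F : SelbergClass) : Prop :=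
  ¬ ∀ s : ℂ, s ≠ 1 → F.toFun s = 1


open LSeries Filter in
private lemma logMul_iterate (f : ℕ → ℂ) (k : ℕ) (n : ℕ) :
    logMul^[k] f n = (Complex.log n) ^ k * f n := by
  induction k with
  | zero => simp
  | succ k ih => rw [Function.iterate_succ_apply', logMul, ih, pow_succ]; ring

open LSeries Filter in
private lemma term_norm_le_aux {g : ℕ → ℂ} {N : ℕ} (hN : 0 < N) (hg : ∀ n, n < N → g n = 0)
    {s : ℂ} (hs : 2 ≤ s.re) (n : ℕ) :
    ‖term g s n‖ ≤ ‖term g 2 n‖ * (N : ℝ) ^ ((2 : ℝ) - s.re) := by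
  rcases lt_or_ge n N with hn | hn
  · have : term g s n = 0 := by
      rcases Nat.eq_zero_or_pos n with rfl | hpos
      · exact term_zero ..
      · rw [term_of_ne_zero hpos.ne', hg n hn, zero_div]
    rw [this, norm_zero]
    positivity
  · have hn0 : n ≠ 0 := by omega
    have hnpos : (0 : ℝ) < n := by positivity
    have hNpos : (0 : ℝ) < N := by positivity
    rw [norm_term_eq, norm_term_eq, if_neg hn0, if_neg hn0]
    have h2 : ((2 : ℂ)).re = (2 : ℝ) := by simp
    rw [h2]
    have key : (n : ℝ) ^ ((2 : ℝ) - s.re) ≤ (N : ℝ) ^ ((2 : ℝ) - s.re) := by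
      rw [show (2 : ℝ) - s.re = -(s.re - 2) by ring, Real.rpow_neg hNpos.le,
        Real.rpow_neg hnpos.le]
      exact inv_anti₀ (Real.rpow_pos_of_pos hNpos _)
        (Real.rpow_le_rpow hNpos.le (by exact_mod_cast hn) (by linarith))
    calc ‖g n‖ / (n : ℝ) ^ s.re = ‖g n‖ / (n : ℝ) ^ (2 : ℝ) * (n : ℝ) ^ ((2:ℝ) - s.re) := by
          rw [div_mul_eq_mul_div, div_eq_div_iff (by positivity) (by positivity),
            mul_assoc, ← Real.rpow_add hnpos]
          norm_num
      _ ≤ ‖g n‖ / (n : ℝ) ^ (2 : ℝ) * (N : ℝ) ^ ((2:ℝ) - s.re) := by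
          gcongr

open LSeries Filter in
private lemma tail_bound {g : ℕ → ℂ} {N : ℕ} (hN : 0 < N) (hg : ∀ n, n < N → g n = 0)
    (hsum : Summable fun n ↦ ‖term g 2 n‖) {s : ℂ} (hs : 2 ≤ s.re) :
    ‖LSeries g s‖ ≤ (∑' n, ‖term g 2 n‖) * (N : ℝ) ^ ((2 : ℝ) - s.re) := by
  have hb := fun n => term_norm_le_aux hN hg hs n
  have hsum2 : Summable fun n ↦ ‖term g 2 n‖ * (N : ℝ) ^ ((2 : ℝ) - s.re) := hsum.mul_right _
  have hsums : Summable fun n ↦ ‖term g s n‖ :=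
    Summable.of_nonneg_of_le (fun n => norm_nonneg _) hb hsum2
  calc ‖LSeries g s‖ ≤ ∑' n, ‖term g s n‖ := norm_tsum_le_tsum_norm hsums
    _ ≤ ∑' n, ‖term g 2 n‖ * (N : ℝ) ^ ((2 : ℝ) - s.re) := Summable.tsum_le_tsum hb hsums hsum2
    _ = _ := tsum_mul_right

open LSeries Filter in
private lemma LSeries_ne_zero_of_le_re {f : ℕ → ℂ} (habs : abscissaOfAbsConv f ≤ 1)
    {n0 : ℕ} (h0 : 0 < n0) (hn0 : f n0 ≠ 0) (hmin : ∀ n, n < n0 → f n = 0) :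
    ∃ σ0 : ℝ, 2 ≤ σ0 ∧ ∀ s : ℂ, σ0 ≤ s.re → LSeries f s ≠ 0 := by
  classical
  set g : ℕ → ℂ := fun n => if n = n0 then 0 else f n with hgdef
  have habs2 : abscissaOfAbsConv f < ((2 : ℂ)).re := by
    refine lt_of_le_of_lt habs ?_
    rw [show ((2:ℂ)).re = (2:ℝ) by norm_num]
    exact_mod_cast one_lt_two
  have hsumf2 : Summable fun n ↦ ‖term f 2 n‖ :=
    summable_norm_iff.mpr (LSeriesSummable_of_abscissaOfAbsConv_lt_re habs2)
  have hsumg2 : Summable fun n ↦ ‖term g 2 n‖ := by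
    refine Summable.of_nonneg_of_le (fun n => norm_nonneg _) (fun n => norm_term_le _ ?_) hsumf2
    by_cases hn : n = n0 <;> simp [hgdef, hn]
  have hgz : ∀ n, n < n0 + 1 → g n = 0 := by
    intro n hn
    rcases eq_or_ne n n0 with rfl | hne
    · simp [hgdef]
    · simpa [hgdef, hne] using hmin n (by omega)
  set C : ℝ := ∑' n, ‖term g 2 n‖ with hC
  have hCnn : 0 ≤ C := tsum_nonneg fun n => norm_nonneg _
  have hfn0 : (0:ℝ) < ‖f n0‖ := norm_pos_iff.mpr hn0
  have hn0R : (0:ℝ) < (n0 : ℝ) := by exact_mod_cast h0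
  have hrlt : ((n0 : ℝ) / (n0 + 1)) < 1 := by
    rw [div_lt_one (by positivity)]; linarith
  have hrnn : (0:ℝ) ≤ (n0 : ℝ) / (n0 + 1) := by positivity
  have htend : Tendsto (fun x : ℝ => C * ((n0 : ℝ) + 1) ^ (2:ℝ) * ((n0 : ℝ) / (n0 + 1)) ^ x)
      atTop (nhds 0) := by
    have := (tendsto_rpow_atTop_of_base_lt_one _ (by linarith) hrlt).const_mul
      (C * ((n0 : ℝ) + 1) ^ (2:ℝ))
    simpa using this
  obtain ⟨x0, hx0⟩ := eventually_atTop.mp (htend.eventually_lt_const hfn0)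
  refine ⟨max 2 x0, le_max_left _ _, fun s hs => ?_⟩
  set x := s.re with hx
  have hx2 : 2 ≤ x := le_trans (le_max_left _ _) hs
  have hkey : C * ((n0 : ℝ) + 1) ^ (2:ℝ) * ((n0 : ℝ) / (n0 + 1)) ^ x < ‖f n0‖ :=
    hx0 x (le_trans (le_max_right _ _) hs)
  have hexp : C * ((n0 : ℝ) + 1) ^ ((2:ℝ) - x) * (n0 : ℝ) ^ x
      = C * ((n0 : ℝ) + 1) ^ (2:ℝ) * ((n0 : ℝ) / (n0 + 1)) ^ x := by
    rw [show (2:ℝ) - x = 2 + (-x) by ring, Real.rpow_add (by positivity),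
      Real.div_rpow hn0R.le (by positivity), Real.rpow_neg (by positivity)]
    field_simp
  have hineq : C * ((n0 : ℝ) + 1) ^ ((2:ℝ) - x) < ‖f n0‖ / (n0 : ℝ) ^ x := by
    rw [lt_div_iff₀ (Real.rpow_pos_of_pos hn0R _)]
    rw [hexp]; exact hkey
  intro hzero
  have hsummf : LSeriesSummable f s :=
    LSeriesSummable_of_abscissaOfAbsConv_lt_re (lt_of_le_of_lt habs (by
      exact_mod_cast lt_of_lt_of_le (by norm_num : (1:ℝ) < 2) hx2))
  have hsplit : LSeries f s = term f s n0 + LSeries g s := by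
    rw [LSeries, Summable.tsum_eq_add_tsum_ite hsummf n0, LSeries]
    congr 1
    refine tsum_congr fun n => ?_
    rcases eq_or_ne n n0 with rfl | hne
    · rw [if_pos rfl, term_of_ne_zero h0.ne']
      simp [hgdef]
    · rw [if_neg hne]
      rcases eq_or_ne n 0 with rfl | h0'
      · simp
      · rw [term_of_ne_zero h0', term_of_ne_zero h0']
        simp [hgdef, hne]
  have htb := tail_bound (Nat.succ_pos n0) hgz hsumg2 (s := s) hx2
  have hterm : term f s n0 = -LSeries g s := by
    have h0' : (0:ℂ) = term f s n0 + LSeries g s := hzero ▸ hsplit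
    linear_combination -h0'
  have hnorm : ‖term f s n0‖ = ‖f n0‖ / (n0 : ℝ) ^ x := by
    rw [norm_term_eq, if_neg h0.ne']
  have : ‖f n0‖ / (n0 : ℝ) ^ x ≤ C * ((n0 : ℝ) + 1) ^ ((2:ℝ) - x) := by
    rw [← hnorm, hterm, norm_neg]
    convert htb using 3
    push_cast
    ring
  linarith


namespace SelbergClass

open LSeries Filter

variable (F : SelbergClass)

/-- coefficients as a function on `ℕ` -/
noncomputable def acoef : ℕ → ℂ := fun n => if n = 0 then 0 else F.a n

/-- log-coefficients as a function on `ℕ` -/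
noncomputable def bcoef : ℕ → ℂ := fun n => if n = 0 then 0 else F.b n

private lemma mem_range_pnat {m : ℕ} (h : m ≠ 0) : m ∈ Set.range (fun n : ℕ+ => (n : ℕ)) :=
  ⟨⟨m, Nat.pos_of_ne_zero h⟩, rfl⟩

private lemma summable_norm_term_ifzero (c : ℕ → ℂ) (s : ℂ)
    (h : Summable fun n : ℕ+ => ‖c n / (n : ℂ) ^ s‖) :
    Summable fun n : ℕ => ‖term (fun m => if m = 0 then 0 else c m) s n‖ := by
  have hinj : Function.Injective (fun n : ℕ+ => (n : ℕ)) := fun a b h => PNat.coe_injective h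
  refine (Function.Injective.summable_iff hinj (fun m hm => ?_)).mp (h.congr fun n => ?_)
  · rcases eq_or_ne m 0 with rfl | h0
    · simp
    · exact absurd (mem_range_pnat h0) hm
  · show ‖c n / (n : ℂ) ^ s‖ = ‖term _ s (n : ℕ)‖
    rw [term_of_ne_zero n.pos.ne', if_neg n.pos.ne']

private lemma tsum_term_ifzero (c : ℕ → ℂ) (s : ℂ) :
    (∑' n : ℕ+, c n / (n : ℂ) ^ s) = LSeries (fun m => if m = 0 then 0 else c m) s := by
  have hinj : Function.Injective (fun n : ℕ+ => (n : ℕ)) := fun a b h => PNat.coe_injective h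
  have hsupp : Function.support (term (fun m => if m = 0 then 0 else c m) s)
      ⊆ Set.range (fun n : ℕ+ => (n : ℕ)) := by
    intro m hm
    rcases eq_or_ne m 0 with rfl | h0
    · exact absurd (term_zero ..) hm
    · exact mem_range_pnat h0
  rw [LSeries, ← Function.Injective.tsum_eq hinj hsupp]
  refine tsum_congr fun n => ?_
  rw [term_of_ne_zero n.pos.ne', if_neg n.pos.ne']

lemma acoef_abscissa : abscissaOfAbsConv F.acoef ≤ 1 := by
  refine abscissaOfAbsConv_le_of_forall_lt_LSeriesSummable fun y hy => ?_
  exact summable_norm_iff.mp <| summable_norm_term_ifzero F.a (y : ℂ)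
    (F.abs_conv (y : ℂ) (by simpa using hy))

lemma toFun_eq_LSeries {s : ℂ} (hs : 1 < s.re) : F.toFun s = LSeries F.acoef s := by
  rw [F.series_eq s hs]
  exact tsum_term_ifzero F.a s

lemma acoef_zero : F.acoef 0 = 0 := by simp [acoef]

/-- If all coefficients `a n`, `n ≥ 2`, vanish, then `F` is trivial. -/
lemma exists_two_le_ne_zero (hF : F.Nontrivial) : ∃ n : ℕ, 2 ≤ n ∧ F.acoef n ≠ 0 := by
  by_contra hcon
  push_neg at hcon
  apply hF
  -- `F` is the constant `a 1` on `re s > 1`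
  have hconst : ∀ s : ℂ, 1 < s.re → F.toFun s = F.acoef 1 := by
    intro s hs
    rw [toFun_eq_LSeries F hs, LSeries, tsum_eq_single 1 ?_]
    · rw [term_of_ne_zero one_ne_zero]
      simp
    · intro n hn
      rcases Nat.eq_zero_or_pos n with rfl | hpos
      · simp
      · rw [term_of_ne_zero hpos.ne']
        have h0 : F.acoef n = 0 := hcon n (by omega)
        rw [h0, zero_div]
  -- the `b`-series tends to `0`
  have hbz : ∀ n, n < 2 → F.bcoef n = 0 := by
    intro n hn
    interval_cases n
    · simp [bcoef]
    · simp only [bcoef, if_neg one_ne_zero]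
      by_contra h
      exact not_isPrimePow_one (F.b_supp 1 h)
  have hbsum : Summable fun n : ℕ => ‖term F.bcoef 2 n‖ := by
    have := F.b_conv 2 (by norm_num)
    exact summable_norm_term_ifzero F.b 2 this
  have hbnd : ∀ x : ℝ, 2 ≤ x → ‖LSeries F.bcoef (x : ℂ)‖ ≤
      (∑' n, ‖term F.bcoef 2 n‖) * (2 : ℝ) ^ ((2:ℝ) - x) := by
    intro x hx
    have := tail_bound (g := F.bcoef) (N := 2) (by norm_num) hbz hbsum
      (s := (x : ℂ)) (by simpa using hx)
    simpa using this
  have htend0 : Tendsto (fun x : ℝ => LSeries F.bcoef (x : ℂ)) atTop (nhds 0) := by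
    refine squeeze_zero_norm' (Filter.eventually_atTop.mpr ⟨2, fun x hx => hbnd x hx⟩) ?_
    have h1 : Tendsto (fun x : ℝ => ((∑' n, ‖term F.bcoef 2 n‖) * 4) * ((2:ℝ)⁻¹) ^ x)
        atTop (nhds 0) := by
      have := (tendsto_rpow_atTop_of_base_lt_one ((2:ℝ)⁻¹) (by norm_num) (by norm_num)).const_mul
        ((∑' n, ‖term F.bcoef 2 n‖) * 4)
      simpa using this
    refine h1.congr fun x => ?_
    rw [show (2:ℝ) - x = 2 + (-x) by ring, Real.rpow_add (by norm_num),
      Real.rpow_neg (by norm_num), Real.inv_rpow (by norm_num)]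
    norm_num
    ring
  -- `exp (b-series) = a 1` for all real `x > 1`
  have hexp : ∀ x : ℝ, 2 ≤ x → Complex.exp (LSeries F.bcoef (x:ℂ)) = F.acoef 1 := by
    intro x hx
    have hre : 1 < ((x : ℂ)).re := by simpa using by linarith
    rw [← hconst (x : ℂ) hre, ← F.log_eq (x:ℂ) hre]
    congr 1
    exact (tsum_term_ifzero F.b (x:ℂ)).symm
  have h1 : Tendsto (fun x : ℝ => Complex.exp (LSeries F.bcoef (x:ℂ))) atTop
      (nhds (Complex.exp 0)) := (Complex.continuous_exp.tendsto 0).comp htend0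
  have h2 : Tendsto (fun x : ℝ => Complex.exp (LSeries F.bcoef (x:ℂ))) atTop
      (nhds (F.acoef 1)) := by
    refine Tendsto.congr' ?_ tendsto_const_nhds
    filter_upwards [Filter.eventually_ge_atTop (2:ℝ)] with x hx
    exact (hexp x hx).symm
  have ha1 : F.acoef 1 = 1 := by
    have := tendsto_nhds_unique h2 h1
    rwa [Complex.exp_zero] at this
  -- identity theorem
  have hU : IsOpen ({(1:ℂ)}ᶜ : Set ℂ) := isOpen_compl_singleton
  have hAnal : AnalyticOnNhd ℂ F.toFun {(1:ℂ)}ᶜ := F.analytic.analyticOnNhd hU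
  have hconn : IsPreconnected ({(1:ℂ)}ᶜ : Set ℂ) :=
    (isConnected_compl_singleton_of_one_lt_rank (by simp) _).isPreconnected
  have hev : F.toFun =ᶠ[nhds (2:ℂ)] fun _ => 1 := by
    have hopen : IsOpen {s : ℂ | 1 < s.re} := isOpen_lt continuous_const Complex.continuous_re
    filter_upwards [hopen.mem_nhds (by norm_num)] with z hz
    rw [hconst z hz, ha1]
  intro s hs
  exact hAnal.eqOn_of_preconnected_of_eventuallyEq (analyticOnNhd_const) hconn
    (by simp : (2:ℂ) ∈ ({(1:ℂ)}ᶜ : Set ℂ)) hev hs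

end SelbergClass

/-- auxiliary algebraic identity -/
private lemma alg_aux {z A B : ℂ} (hz : z ≠ 0) (N : ℕ) :
    z ^ (N + 1) * ((A * z ^ N - B * ((N : ℂ) * z ^ (N - 1))) / (z ^ N) ^ 2) =
      z * A - (N : ℂ) * B := by
  rcases Nat.eq_zero_or_pos N with rfl | hN
  · simp
  · obtain ⟨M, rfl⟩ : ∃ M, N = M + 1 := ⟨N - 1, by omega⟩
    have hp : z ^ (M + 1) ≠ 0 := pow_ne_zero _ hz
    simp only [Nat.add_sub_cancel]
    field_simp
    ring

namespace SelbergClass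

/-- the entire functions representing `(s-1)^(m+k) F^(k)(s)` -/
noncomputable def auxE (F : SelbergClass) (k : ℕ) : ℂ → ℂ :=
  Nat.rec F.E (fun k Ek => fun s => (s - 1) * deriv Ek s - ((F.m + k : ℕ) : ℂ) * Ek s) k

lemma auxE_zero (F : SelbergClass) : F.auxE 0 = F.E := rfl

lemma auxE_succ (F : SelbergClass) (k : ℕ) :
    F.auxE (k + 1) = fun s =>
      (s - 1) * deriv (F.auxE k) s - ((F.m + k : ℕ) : ℂ) * F.auxE k s := rfl

lemma auxE_diff (F : SelbergClass) (k : ℕ) : Differentiable ℂ (F.auxE k) := by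
  induction k with
  | zero => exact F.E_diff
  | succ k ih =>
    have hd : Differentiable ℂ (deriv (F.auxE k)) := by
      have := (analyticOnNhd_univ_iff_differentiable.mpr ih).deriv
      exact fun z => (this z (Set.mem_univ z)).differentiableAt
    rw [auxE_succ]
    exact ((differentiable_id.sub_const 1).mul hd).sub (differentiable_const _ |>.mul ih)

lemma auxE_eq (F : SelbergClass) (k : ℕ) : ∀ s : ℂ, s ≠ 1 →
    F.auxE k s = (s - 1) ^ (F.m + k) * iteratedDeriv k F.toFun s := by
  induction k with
  | zero =>
    intro s hs
    rw [iteratedDeriv_zero, Nat.add_zero, auxE_zero]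
    exact F.E_eq s hs
  | succ k ih =>
    intro s hs
    have hsub : s - 1 ≠ 0 := sub_ne_zero.mpr hs
    have hev : iteratedDeriv k F.toFun =ᶠ[nhds s]
        fun z => F.auxE k z / (z - 1) ^ (F.m + k) := by
      filter_upwards [isOpen_compl_singleton.mem_nhds hs] with z hz
      rw [ih z hz, mul_div_cancel_left₀ _ (pow_ne_zero _ (sub_ne_zero.mpr hz))]
    have hde : HasDerivAt (fun z : ℂ => (z - 1) ^ (F.m + k))
        (((F.m + k : ℕ) : ℂ) * (s - 1) ^ (F.m + k - 1)) s := by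
      refine (((hasDerivAt_id s).sub_const 1).pow (F.m + k)).congr_deriv ?_; simp
    have hdA : DifferentiableAt ℂ (F.auxE k) s := (F.auxE_diff k).differentiableAt
    rw [iteratedDeriv_succ, hev.symm.deriv_eq.symm, deriv_fun_div hdA hde.differentiableAt
      (pow_ne_zero _ hsub), hde.deriv, auxE_succ,
      show F.m + (k + 1) = F.m + k + 1 by omega, alg_aux hsub (F.m + k)]

end SelbergClass

open LSeries Filter in
/-- For `F ∈ 𝒮` not identically `1`, any `k ≥ 0` and any `α > 0`, the `k`-th derivative
`F^(k)` has only finitely many zeros with `Re s > -α` and `|Im s| ≤ T_F`. -/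
theorem selberg_deriv_finitely_many_zeros_low (F : SelbergClass) (hF : F.Nontrivial)
    (k : ℕ) (α : ℝ) (hα : 0 < α) :
    {s : ℂ | s ≠ 1 ∧ iteratedDeriv k F.toFun s = 0 ∧ -α < s.re ∧ |s.im| ≤ F.TF}.Finite := by
  classical
  obtain ⟨n2, hn2, hn2ne⟩ := SelbergClass.exists_two_le_ne_zero F hF
  set f := F.acoef with hf
  set g := LSeries.logMul^[k] f with hg
  have hlogne : Complex.log (n2 : ℂ) ≠ 0 := by
    have hpos : (0:ℝ) < Real.log n2 := Real.log_pos (by exact_mod_cast hn2.trans_lt' one_lt_two)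
    intro h
    have hre : (Complex.log (n2:ℂ)).re = Real.log n2 := by
      rw [Complex.log_re, Complex.norm_natCast]
    rw [h] at hre
    simp only [Complex.zero_re] at hre
    linarith
  have hgn2 : g n2 ≠ 0 := by
    rw [hg, logMul_iterate]
    exact mul_ne_zero (pow_ne_zero _ hlogne) hn2ne
  have hex : ∃ n, 0 < n ∧ g n ≠ 0 := ⟨n2, by omega, hgn2⟩
  obtain ⟨hn0pos, hn0ne⟩ := Nat.find_spec hex
  set n0 := Nat.find hex with hn0
  have hmin : ∀ n, n < n0 → g n = 0 := by
    intro n hn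
    rcases Nat.eq_zero_or_pos n with rfl | hp
    · rw [hg, logMul_iterate, hf]
      simp [SelbergClass.acoef]
    · by_contra hne
      exact (Nat.find_min hex hn) ⟨hp, hne⟩
  have habs : abscissaOfAbsConv g ≤ 1 := by
    rw [hg, absicssaOfAbsConv_logPowMul]
    exact F.acoef_abscissa
  obtain ⟨σ0, hσ2, hσ⟩ := LSeries_ne_zero_of_le_re habs hn0pos hn0ne hmin
  have hFd : ∀ s : ℂ, 1 < s.re → iteratedDeriv k F.toFun s = (-1)^k * LSeries g s := by
    intro s hs
    have hev : F.toFun =ᶠ[nhds s] LSeries f := by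
      filter_upwards [(isOpen_lt continuous_const Complex.continuous_re).mem_nhds hs] with z hz
      exact F.toFun_eq_LSeries hz
    rw [hev.iteratedDeriv_eq k,
      LSeries_iteratedDeriv k (lt_of_le_of_lt F.acoef_abscissa (by exact_mod_cast hs)), hg]
  have hne : ∀ s : ℂ, σ0 ≤ s.re → iteratedDeriv k F.toFun s ≠ 0 := by
    intro s hs
    rw [hFd s (by linarith)]
    exact mul_ne_zero (pow_ne_zero _ (by norm_num)) (hσ s hs)
  have hσne1 : (σ0 : ℂ) ≠ 1 := by
    intro h
    have := congrArg Complex.re h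
    simp only [Complex.ofReal_re, Complex.one_re] at this
    linarith
  have hauxne : F.auxE k (σ0:ℂ) ≠ 0 := by
    rw [F.auxE_eq k _ hσne1]
    exact mul_ne_zero (pow_ne_zero _ (sub_ne_zero.mpr hσne1)) (hne _ (by simp))
  set R := max α σ0 + |F.TF| with hR
  have hsub : {s : ℂ | s ≠ 1 ∧ iteratedDeriv k F.toFun s = 0 ∧ -α < s.re ∧ |s.im| ≤ F.TF}
      ⊆ {s : ℂ | F.auxE k s = 0} ∩ Metric.closedBall 0 R := by
    rintro s ⟨hs1, hs0, hsre, hsim⟩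
    have hlt : s.re < σ0 := by
      by_contra hge
      exact hne s (le_of_not_gt hge) hs0
    constructor
    · rw [Set.mem_setOf_eq, F.auxE_eq k s hs1, hs0, mul_zero]
    · rw [Metric.mem_closedBall, dist_zero_right]
      have h1 : |s.re| ≤ max α σ0 := by
        rw [abs_le]
        constructor
        · have := le_max_left α σ0; linarith
        · have := le_max_right α σ0; linarith
      have h2 : |s.im| ≤ |F.TF| := le_trans hsim (le_abs_self _)
      calc ‖s‖ ≤ |s.re| + |s.im| := Complex.norm_le_abs_re_add_abs_im s
        _ ≤ R := by rw [hR]; exact add_le_add h1 h2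
  rw [← Set.not_infinite]
  intro hinf
  obtain ⟨z, hzK, hz⟩ := hinf.exists_accPt_of_subset_isCompact
    (isCompact_closedBall (0:ℂ) R) (fun s hs => (hsub hs).2)
  have hfreq : ∃ᶠ w in nhdsWithin z {z}ᶜ, F.auxE k w = 0 := by
    rw [frequently_nhdsWithin_iff]
    refine (accPt_iff_frequently.mp hz).mono ?_
    rintro y ⟨hy1, hy2⟩
    exact ⟨(hsub hy2).1, hy1⟩
  have hzero := (analyticOnNhd_univ_iff_differentiable.mpr
    (F.auxE_diff k)).eqOn_zero_of_preconnected_of_frequently_eq_zero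
    isPreconnected_univ (Set.mem_univ z) hfreq
  exact hauxne (hzero (Set.mem_univ _))
end
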